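/- Let t be a probability distribution on n points with all t_i > 0 and let M ≥ n. Let t^a be an M-type distribution minimizing D(t‖p) over all M-type distributions p, and let ν = ν(M) ≥ 1 be the normalization constant of the reverse I-projection of t onto P_M. Then D(t‖t^a) ≤ log ν + (log 2)/2 · (1 - ν(1 - n/M)). -/

import Mathlib

open Finset

lemma half_le_log_two' : (1:ℝ)/2 ≤ Real.log 2 := by
  have := Real.log_two_gt_d9
  linarith

lemma pointwise_bound' (m : ℕ) (hm : 1 ≤ m) (x : ℝ) (hx1 : (m:ℝ) ≤ x) (hx2 : x < (m:ℝ) + 1) :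
    x * Real.log (x / m) - (x - m) * (x * Real.log (((m:ℝ) + 1) / m)) ≤ 1/4 := by
  have hm0 : (0:ℝ) < m := by exact_mod_cast hm
  have hx0 : (0:ℝ) < x := lt_of_lt_of_le hm0 hx1
  have hm1 : (0:ℝ) < (m:ℝ) + 1 := by linarith
  set f : ℝ := x - m with hf
  have hf0 : 0 ≤ f := by simp [hf]; linarith
  have hf1 : f ≤ 1 := by simp [hf]; linarith
  have hlog1 : Real.log (x / m) ≤ f / m := by
    have h := Real.log_le_sub_one_of_pos (div_pos hx0 hm0)
    have h2 : x / m - 1 = f / m := by field_simp; rw [hf]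
    linarith
  have hlog2 : Real.log (x / ((m:ℝ)+1)) ≤ (f - 1) / ((m:ℝ)+1) := by
    have h := Real.log_le_sub_one_of_pos (div_pos hx0 hm1)
    have h2 : x / ((m:ℝ)+1) - 1 = (f-1) / ((m:ℝ)+1) := by
      field_simp
      simp only [hf]
      ring
    linarith
  have hid : x * Real.log (x / m) - f * (x * Real.log (((m:ℝ)+1)/m))
      = x * ((1 - f) * Real.log (x/m) + f * Real.log (x/((m:ℝ)+1))) := by
    rw [Real.log_div (ne_of_gt hx0) (ne_of_gt hm0), Real.log_div (ne_of_gt hx0) (ne_of_gt hm1),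
      Real.log_div (ne_of_gt hm1) (ne_of_gt hm0)]
    ring
  rw [hid]
  have hbr : (1 - f) * Real.log (x/m) + f * Real.log (x/((m:ℝ)+1))
      ≤ f * (1 - f) / (m * ((m:ℝ)+1)) := by
    have h1 : (1-f) * Real.log (x/m) ≤ (1-f) * (f/m) :=
      mul_le_mul_of_nonneg_left hlog1 (by linarith)
    have h2 : f * Real.log (x/((m:ℝ)+1)) ≤ f * ((f-1)/((m:ℝ)+1)) :=
      mul_le_mul_of_nonneg_left hlog2 hf0
    have h3 : (1-f)*(f/m) + f*((f-1)/((m:ℝ)+1)) = f * (1-f) / (m * ((m:ℝ)+1)) := by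
      field_simp
      ring
    linarith
  have hc0 : 0 ≤ f * (1 - f) / (m * ((m:ℝ)+1)) := by
    apply div_nonneg
    · nlinarith
    · positivity
  calc x * ((1 - f) * Real.log (x/m) + f * Real.log (x/((m:ℝ)+1)))
      ≤ x * (f*(1-f)/(m*((m:ℝ)+1))) := mul_le_mul_of_nonneg_left hbr (le_of_lt hx0)
    _ ≤ ((m:ℝ)+1) * (f*(1-f)/(m*((m:ℝ)+1))) := mul_le_mul_of_nonneg_right (le_of_lt hx2) hc0
    _ = f*(1-f)/m := by field_simp
    _ ≤ 1/4 := by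
        rw [div_le_iff₀ hm0]
        have hmc : (1:ℝ) ≤ (m:ℝ) := by exact_mod_cast hm
        nlinarith [sq_nonneg (2*f - 1), hmc]

lemma exists_top' {ι : Type*} [DecidableEq ι] (s : Finset ι) (d : ι → ℝ) :
    ∀ u : ℕ, u ≤ s.card → ∃ U ⊆ s, U.card = u ∧ ∀ i ∈ U, ∀ j ∈ s, j ∉ U → d j ≤ d i := by
  intro u
  induction u with
  | zero => intro _; exact ⟨∅, empty_subset s, card_empty, by simp⟩
  | succ u ih =>
    intro hu
    obtain ⟨U, hUs, hcard, htop⟩ := ih (Nat.le_of_succ_le hu)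
    have hne : (s \ U).Nonempty := by
      rw [← Finset.card_pos, Finset.card_sdiff_of_subset hUs]
      omega
    obtain ⟨i0, hi0, hmax⟩ := Finset.exists_max_image (s \ U) d hne
    have hi0s : i0 ∈ s := (Finset.mem_sdiff.mp hi0).1
    have hi0U : i0 ∉ U := (Finset.mem_sdiff.mp hi0).2
    refine ⟨insert i0 U, ?_, ?_, ?_⟩
    · exact Finset.insert_subset hi0s hUs
    · rw [Finset.card_insert_of_notMem hi0U, hcard]
    · intro i hi j hj hjU
      have hjU' : j ∉ U := fun h => hjU (Finset.mem_insert_of_mem h)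
      rcases Finset.mem_insert.mp hi with h | h
      · subst h
        exact hmax j (Finset.mem_sdiff.mpr ⟨hj, hjU'⟩)
      · exact htop i h j hj hjU'

lemma select' {ι : Type*} [DecidableEq ι] (s : Finset ι) (d f : ι → ℝ)
    (hd : ∀ i ∈ s, 0 ≤ d i) (hf0 : ∀ i ∈ s, 0 ≤ f i) (hf1 : ∀ i ∈ s, f i ≤ 1)
    (u : ℕ) (hu : ∑ i ∈ s, f i ≤ u) (hus : u ≤ s.card) :
    ∃ U ⊆ s, U.card = u ∧ ∑ i ∈ s, f i * d i ≤ ∑ i ∈ U, d i := by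
  obtain ⟨U, hUs, hUcard, htop⟩ := exists_top' s d u hus
  refine ⟨U, hUs, hUcard, ?_⟩
  rcases Nat.eq_zero_or_pos u with h0 | hpos
  · subst h0
    have hU : U = ∅ := Finset.card_eq_zero.mp hUcard
    subst hU
    simp only [Finset.sum_empty]
    have hz : ∀ i ∈ s, f i = 0 := by
      intro i hi
      have h := (Finset.sum_eq_zero_iff_of_nonneg hf0).mp
        (le_antisymm (by exact_mod_cast hu) (Finset.sum_nonneg hf0))
      exact h i hi
    exact le_of_eq (Finset.sum_eq_zero fun i hi => by rw [hz i hi, zero_mul])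
  · have hUne : U.Nonempty := Finset.card_pos.mp (by omega)
    obtain ⟨i0, hi0, hmin⟩ := Finset.exists_min_image U d hUne
    have hi0s : i0 ∈ s := hUs hi0
    have hd0 : 0 ≤ d i0 := hd i0 hi0s
    have hsum_split : ∑ i ∈ s, f i * d i = ∑ i ∈ s \ U, f i * d i + ∑ i ∈ U, f i * d i :=
      (Finset.sum_sdiff hUs).symm
    have h1 : ∑ i ∈ s \ U, f i * d i ≤ (∑ i ∈ s \ U, f i) * d i0 := by
      rw [Finset.sum_mul]
      apply Finset.sum_le_sum
      intro j hj
      have hjs : j ∈ s := (Finset.mem_sdiff.mp hj).1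
      have hjU : j ∉ U := (Finset.mem_sdiff.mp hj).2
      exact mul_le_mul_of_nonneg_left (htop i0 hi0 j hjs hjU) (hf0 j hjs)
    have h2 : (∑ i ∈ s \ U, f i) * d i0 ≤ ((u:ℝ) - ∑ i ∈ U, f i) * d i0 := by
      apply mul_le_mul_of_nonneg_right _ hd0
      have : ∑ i ∈ s \ U, f i + ∑ i ∈ U, f i = ∑ i ∈ s, f i := Finset.sum_sdiff hUs
      linarith
    have h3 : ((u:ℝ) - ∑ i ∈ U, f i) * d i0 ≤ ∑ i ∈ U, (1 - f i) * d i := by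
      have hcard : ((u:ℝ) - ∑ i ∈ U, f i) = ∑ i ∈ U, (1 - f i) := by
        rw [Finset.sum_sub_distrib, Finset.sum_const, ← hUcard]
        simp
      rw [hcard, Finset.sum_mul]
      apply Finset.sum_le_sum
      intro i hi
      exact mul_le_mul_of_nonneg_left (hmin i hi) (by linarith [hf1 i (hUs hi)])
    have h4 : ∑ i ∈ U, f i * d i + ∑ i ∈ U, (1 - f i) * d i = ∑ i ∈ U, d i := by
      rw [← Finset.sum_add_distrib]
      apply Finset.sum_congr rfl
      intro i _
      ring
    linarith

/-- Informational divergence D(t‖p) with the convention D = ⊤ if some t i > 0 but p i = 0. -/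
noncomputable def Dkl {n : ℕ} (t p : Fin n → ℝ) : EReal :=
  if ∀ i, 0 < t i → 0 < p i then
    ((∑ i, if 0 < t i then t i * Real.log (t i / p i) else 0 : ℝ) : EReal)
  else ⊤


set_option maxHeartbeats 1000000 in
theorem approximation_bound
    {n M : ℕ} (hn : 0 < n) (hnM : n ≤ M)
    (t : Fin n → ℝ) (ht_pos : ∀ i, 0 < t i) (ht_sum : ∑ i, t i = 1)
    (ν : ℝ) (hν : 1 ≤ ν)
    (hnorm : ∑ i, (t i / ν + max 0 (1 / (M : ℝ) - t i / ν)) = 1)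
    (c : Fin n → ℕ) (hc : ∑ i, c i = M)
    (ta : Fin n → ℝ) (hta : ∀ i, ta i = (c i : ℝ) / M)
    (hopt : ∀ c' : Fin n → ℕ, ∑ i, c' i = M →
      Dkl t ta ≤ Dkl t (fun i => (c' i : ℝ) / M)) :
    Dkl t ta ≤
      ((Real.log ν + Real.log 2 / 2 * (1 - ν * (1 - (n : ℝ) / M)) : ℝ) : EReal) := by
  classical
  have hM0 : 0 < M := lt_of_lt_of_le hn hnM
  have hMR : (0:ℝ) < M := by exact_mod_cast hM0
  have hν0 : (0:ℝ) < ν := lt_of_lt_of_le one_pos hν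
  set x : Fin n → ℝ := fun i => (M:ℝ) * (t i / ν) with hxdef
  have hx0 : ∀ i, 0 < x i := fun i => mul_pos hMR (div_pos (ht_pos i) hν0)
  set P : Fin n → Prop := fun i => t i / ν < 1/(M:ℝ) with hPdef
  set A : Finset (Fin n) := univ.filter P with hAdef
  set B : Finset (Fin n) := univ.filter (fun i => ¬ P i) with hBdef
  set k := A.card with hkdef
  set N := B.card with hNdef
  have hkN : k + N = n := by
    rw [hkdef, hNdef, hAdef, hBdef, Finset.card_filter_add_card_filter_not]
    simp
  -- split hnorm
  have hsplit : (k:ℝ) * (1/(M:ℝ)) + ∑ i ∈ B, t i / ν = 1 := by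
    have heq : ∀ i ∈ (univ : Finset (Fin n)),
        t i / ν + max 0 (1/(M:ℝ) - t i / ν) = if P i then 1/(M:ℝ) else t i / ν := by
      intro i _
      by_cases h : P i
      · rw [if_pos h, max_eq_right (by simp only [hPdef] at h; linarith)]
        ring
      · rw [if_neg h, max_eq_left (by simp only [hPdef, not_lt] at h; linarith)]
        ring
    rw [Finset.sum_congr rfl heq, Finset.sum_ite, Finset.sum_const] at hnorm
    simpa [hkdef, hAdef, hBdef, nsmul_eq_mul] using hnorm
  have hxB : ∑ i ∈ B, x i = (M:ℝ) - k := by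
    rw [hxdef]
    simp only
    rw [← Finset.mul_sum]
    have h1 : ∑ i ∈ B, t i / ν = 1 - (k:ℝ) * (1/(M:ℝ)) := by linarith
    rw [h1]
    field_simp
  set m' : Fin n → ℕ := fun i => ⌊x i⌋₊ with hmdef
  have hx1B : ∀ i ∈ B, 1 ≤ x i := by
    intro i hi
    have h : ¬ P i := (Finset.mem_filter.mp hi).2
    simp only [hPdef, not_lt] at h
    have := mul_le_mul_of_nonneg_left h (le_of_lt hMR)
    rw [hxdef]
    simp only
    calc (1:ℝ) = (M:ℝ) * (1/(M:ℝ)) := by field_simp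
    _ ≤ (M:ℝ) * (t i / ν) := this
  have hm1 : ∀ i ∈ B, 1 ≤ m' i := by
    intro i hi
    exact Nat.le_floor (by exact_mod_cast hx1B i hi)
  have hmle : ∀ i, (m' i : ℝ) ≤ x i := fun i => Nat.floor_le (le_of_lt (hx0 i))
  have hltm : ∀ i, x i < (m' i : ℝ) + 1 := fun i => Nat.lt_floor_add_one (x i)
  set S := ∑ i ∈ B, m' i with hSdef
  have hScast : (S:ℝ) = ∑ i ∈ B, (m' i : ℝ) := by rw [hSdef]; push_cast; rfl
  have hSle : (S:ℝ) ≤ (M:ℝ) - k := by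
    rw [hScast, ← hxB]
    exact Finset.sum_le_sum fun i _ => hmle i
  have hMleR : (M:ℝ) - k ≤ (S:ℝ) + N := by
    rw [hScast, ← hxB]
    have : ∑ i ∈ B, x i ≤ ∑ i ∈ B, ((m' i : ℝ) + 1) :=
      Finset.sum_le_sum fun i _ => le_of_lt (hltm i)
    rw [Finset.sum_add_distrib, Finset.sum_const, nsmul_eq_mul, mul_one] at this
    linarith
  have hSk : S + k ≤ M := by
    have : ((S + k : ℕ) : ℝ) ≤ (M:ℝ) := by push_cast; linarith
    exact_mod_cast this
  have hMSNk : M ≤ S + N + k := by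
    have : (M:ℝ) ≤ ((S + N + k : ℕ) : ℝ) := by push_cast; linarith
    exact_mod_cast this
  set u : ℕ := M - (S + k) with hudef
  have huR : (u:ℝ) = (M:ℝ) - k - S := by
    rw [hudef, Nat.cast_sub hSk]
    push_cast
    ring
  have huN : u ≤ N := by omega
  -- the fractional parts and gains
  set f : Fin n → ℝ := fun i => x i - (m' i : ℝ) with hfdef
  set d : Fin n → ℝ := fun i => x i * Real.log (((m' i : ℝ) + 1) / (m' i : ℝ)) with hddef
  have hfsum : ∑ i ∈ B, f i = (u:ℝ) := by
    rw [hfdef]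
    simp only
    rw [Finset.sum_sub_distrib, hxB, ← hScast, huR]
  have hf0 : ∀ i ∈ B, 0 ≤ f i := fun i _ => by simp only [hfdef]; linarith [hmle i]
  have hf1 : ∀ i ∈ B, f i ≤ 1 := fun i _ => by simp only [hfdef]; linarith [hltm i]
  have hd0 : ∀ i ∈ B, 0 ≤ d i := by
    intro i hi
    have hmpos : (0:ℝ) < (m' i : ℝ) := by exact_mod_cast hm1 i hi
    apply mul_nonneg (le_of_lt (hx0 i))
    apply Real.log_nonneg
    rw [le_div_iff₀ hmpos]
    linarith
  obtain ⟨U, hUB, hUcard, hUsum⟩ := select' B d f hd0 hf0 hf1 u (le_of_eq hfsum) huN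
  -- the constructed type
  set c' : Fin n → ℕ := fun i => if i ∈ U then m' i + 1 else if i ∈ B then m' i else 1
    with hc'def
  have hc'B : ∀ i ∈ B, i ∉ U → c' i = m' i := by
    intro i hi hiU
    simp only [hc'def, if_neg hiU, if_pos hi]
  have hc'U : ∀ i ∈ U, c' i = m' i + 1 := by
    intro i hi
    simp only [hc'def, if_pos hi]
  have hc'A : ∀ i ∈ A, c' i = 1 := by
    intro i hi
    have hP : P i := (Finset.mem_filter.mp hi).2
    have hiB : i ∉ B := by
      rw [hBdef]
      simp [hP]
    have hiU : i ∉ U := fun h => hiB (hUB h)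
    simp only [hc'def, if_neg hiU, if_neg hiB]
  have hc'pos : ∀ i, 1 ≤ c' i := by
    intro i
    by_cases hU : i ∈ U
    · rw [hc'U i hU]; omega
    · by_cases hB : i ∈ B
      · rw [hc'B i hB hU]; exact hm1 i hB
      · simp only [hc'def, if_neg hU, if_neg hB]
        exact le_refl 1
  have hc'sum : ∑ i, c' i = M := by
    rw [← Finset.sum_filter_add_sum_filter_not univ P c', ← hAdef, ← hBdef]
    have hA1 : ∑ i ∈ A, c' i = k := by
      rw [Finset.sum_congr rfl hc'A, Finset.sum_const, smul_eq_mul, mul_one]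
    have hB1 : ∑ i ∈ B, c' i = S + u := by
      rw [← Finset.sum_sdiff hUB]
      have h1 : ∑ i ∈ B \ U, c' i = ∑ i ∈ B \ U, m' i := by
        apply Finset.sum_congr rfl
        intro i hi
        exact hc'B i (Finset.mem_sdiff.mp hi).1 (Finset.mem_sdiff.mp hi).2
      have h2 : ∑ i ∈ U, c' i = (∑ i ∈ U, m' i) + u := by
        rw [Finset.sum_congr rfl hc'U, Finset.sum_add_distrib, Finset.sum_const,
          smul_eq_mul, mul_one, hUcard]
      rw [h1, h2, hSdef, ← Finset.sum_sdiff hUB]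
      ring
    rw [hA1, hB1]
    omega
  -- apply optimality
  refine le_trans (hopt c' hc'sum) ?_
  have hcond : ∀ i, 0 < t i → 0 < (fun i => (c' i : ℝ) / M) i := by
    intro i _
    have : (0:ℝ) < (c' i : ℝ) := by exact_mod_cast hc'pos i
    exact div_pos this hMR
  rw [Dkl, if_pos hcond]
  rw [EReal.coe_le_coe_iff]
  have hc'posR : ∀ i, (0:ℝ) < (c' i : ℝ) := fun i => by exact_mod_cast hc'pos i
  -- rewrite each term
  have hterm : ∀ i ∈ (univ : Finset (Fin n)),
      (if 0 < t i then t i * Real.log (t i / ((c' i : ℝ) / M)) else 0)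
      = t i * Real.log ν + t i * Real.log (x i / (c' i : ℝ)) := by
    intro i _
    rw [if_pos (ht_pos i)]
    have h1 : t i / ((c' i : ℝ)/M) = ν * (x i / (c' i : ℝ)) := by
      have hcne : (c' i : ℝ) ≠ 0 := ne_of_gt (hc'posR i)
      rw [hxdef]
      field_simp
    rw [h1, Real.log_mul (ne_of_gt hν0) (ne_of_gt (div_pos (hx0 i) (hc'posR i)))]
    ring
  rw [Finset.sum_congr rfl hterm, Finset.sum_add_distrib, ← Finset.sum_mul, ht_sum, one_mul]
  -- bound Q := ∑ t i log (x i / c' i)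
  set Q := ∑ i, t i * Real.log (x i / (c' i : ℝ)) with hQdef
  have hQsplit : Q = (∑ i ∈ A, t i * Real.log (x i / (c' i : ℝ)))
      + ∑ i ∈ B, t i * Real.log (x i / (c' i : ℝ)) := by
    rw [hQdef, ← Finset.sum_filter_add_sum_filter_not univ P, ← hAdef, ← hBdef]
  have hQA : ∑ i ∈ A, t i * Real.log (x i / (c' i : ℝ)) ≤ 0 := by
    apply Finset.sum_nonpos
    intro i hi
    have hP : P i := (Finset.mem_filter.mp hi).2
    have hxi1 : x i ≤ 1 := by
      simp only [hPdef] at hP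
      rw [hxdef]
      simp only
      have h2 := mul_lt_mul_of_pos_left hP hMR
      have h3 : (M:ℝ) * (1/(M:ℝ)) = 1 := by field_simp
      linarith
    rw [hc'A i hi]
    have hlog : Real.log (x i / ((1:ℕ):ℝ)) ≤ 0 := by
      simp only [Nat.cast_one, div_one]
      exact Real.log_nonpos (le_of_lt (hx0 i)) hxi1
    exact mul_nonpos_of_nonneg_of_nonpos (le_of_lt (ht_pos i)) hlog
  -- on B
  have htB : ∀ i, t i = (ν / M) * x i := by
    intro i
    rw [hxdef]
    field_simp
  have hQB : ∑ i ∈ B, t i * Real.log (x i / (c' i : ℝ))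
      = (ν / M) * ∑ i ∈ B, x i * Real.log (x i / (c' i : ℝ)) := by
    rw [Finset.mul_sum]
    apply Finset.sum_congr rfl
    intro i _
    rw [htB i]
    ring
  set a : Fin n → ℝ := fun i => x i * Real.log (x i / (m' i : ℝ)) with hadef
  have hW : ∑ i ∈ B, x i * Real.log (x i / (c' i : ℝ))
      = (∑ i ∈ B, a i) - ∑ i ∈ U, d i := by
    rw [← Finset.sum_sdiff hUB, ← Finset.sum_sdiff (s₁ := U) (s₂ := B) hUB (f := a)]
    have h1 : ∑ i ∈ B \ U, x i * Real.log (x i / (c' i : ℝ)) = ∑ i ∈ B \ U, a i := by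
      apply Finset.sum_congr rfl
      intro i hi
      rw [hc'B i (Finset.mem_sdiff.mp hi).1 (Finset.mem_sdiff.mp hi).2, hadef]
    have h2 : ∑ i ∈ U, x i * Real.log (x i / (c' i : ℝ)) = ∑ i ∈ U, (a i - d i) := by
      apply Finset.sum_congr rfl
      intro i hi
      have hiB : i ∈ B := hUB hi
      have hmpos : (0:ℝ) < (m' i : ℝ) := by exact_mod_cast hm1 i hiB
      have hm1pos : (0:ℝ) < (m' i : ℝ) + 1 := by linarith
      rw [hc'U i hi, hadef, hddef]
      simp only
      push_cast
      rw [Real.log_div (ne_of_gt (hx0 i)) (ne_of_gt hm1pos),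
        Real.log_div (ne_of_gt (hx0 i)) (ne_of_gt hmpos),
        Real.log_div (ne_of_gt hm1pos) (ne_of_gt hmpos)]
      ring
    rw [h1, h2, Finset.sum_sub_distrib]
    ring
  have hWb : ∑ i ∈ B, x i * Real.log (x i / (c' i : ℝ)) ≤ (N:ℝ) * (1/4) := by
    rw [hW]
    have h1 : (∑ i ∈ B, a i) - ∑ i ∈ U, d i ≤ (∑ i ∈ B, a i) - ∑ i ∈ B, f i * d i := by
      linarith [hUsum]
    have h2 : (∑ i ∈ B, a i) - ∑ i ∈ B, f i * d i = ∑ i ∈ B, (a i - f i * d i) := by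
      rw [Finset.sum_sub_distrib]
    have h3 : ∑ i ∈ B, (a i - f i * d i) ≤ ∑ i ∈ B, (1/4 : ℝ) := by
      apply Finset.sum_le_sum
      intro i hi
      have := pointwise_bound' (m' i) (hm1 i hi) (x i) (hmle i) (hltm i)
      simpa [hadef, hfdef, hddef] using this
    rw [Finset.sum_const, nsmul_eq_mul] at h3
    linarith
  -- the mass identity for the final comparison
  have htAB : (∑ i ∈ A, t i) + ∑ i ∈ B, t i = 1 := by
    rw [← ht_sum, hAdef, hBdef, Finset.sum_filter_add_sum_filter_not]
  have htBsum : ∑ i ∈ B, t i = ν * (1 - (k:ℝ)/M) := by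
    have h1 : ∑ i ∈ B, t i = ν * ∑ i ∈ B, t i / ν := by
      rw [Finset.mul_sum]
      apply Finset.sum_congr rfl
      intro i _
      field_simp
    rw [h1]
    have h2 : ∑ i ∈ B, t i / ν = 1 - (k:ℝ) * (1/M) := by linarith
    rw [h2]
    ring
  have hSA : (0:ℝ) ≤ 1 - ν + ν * k / M := by
    have h0 : (0:ℝ) ≤ ∑ i ∈ A, t i := Finset.sum_nonneg fun i _ => le_of_lt (ht_pos i)
    have h1 : ∑ i ∈ A, t i = 1 - ν + ν * k / M := by
      rw [htBsum] at htAB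
      field_simp at htAB ⊢
      linarith
    linarith
  have hnR : (n:ℝ) = (k:ℝ) + N := by exact_mod_cast hkN.symm
  have hE : (ν / M) * N ≤ 1 - ν * (1 - (n:ℝ)/M) := by
    rw [hnR]
    have : 1 - ν * (1 - ((k:ℝ) + N)/M) = (1 - ν + ν * k / M) + ν * N / M := by
      field_simp
      ring
    rw [this]
    have : (ν / M) * N = ν * N / M := by ring
    linarith [hSA, this.le, this.ge]
  have hE0 : (0:ℝ) ≤ 1 - ν * (1 - (n:ℝ)/M) := by
    have : (0:ℝ) ≤ (ν / M) * N := mul_nonneg (div_nonneg hν0.le hMR.le) (Nat.cast_nonneg _)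
    linarith
  -- final combination
  have hfinal : (ν / M) * ((N:ℝ) * (1/4)) ≤ Real.log 2 / 2 * (1 - ν * (1 - (n:ℝ)/M)) := by
    have hh : (ν / M) * ((N:ℝ) * (1/4)) = ((ν / M) * N) * (1/4) := by ring
    rw [hh]
    calc ((ν / M) * N) * (1/4) ≤ (1 - ν * (1 - (n:ℝ)/M)) * (1/4) :=
          mul_le_mul_of_nonneg_right hE (by norm_num)
      _ ≤ (1 - ν * (1 - (n:ℝ)/M)) * (Real.log 2 / 2) := by
          apply mul_le_mul_of_nonneg_left _ hE0
          linarith [half_le_log_two']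
      _ = Real.log 2 / 2 * (1 - ν * (1 - (n:ℝ)/M)) := by ring
  have hQb : Q ≤ Real.log 2 / 2 * (1 - ν * (1 - (n:ℝ)/M)) := by
    rw [hQsplit, hQB]
    have hB2 : (ν / M) * ∑ i ∈ B, x i * Real.log (x i / (c' i : ℝ))
        ≤ (ν / M) * ((N:ℝ) * (1/4)) :=
      mul_le_mul_of_nonneg_left hWb (by positivity)
    linarith
  linarith [hQb]
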